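/- As ν → ∞ through positive real values, 2·ν^{ν/2+1}·|zw|^{ν/2}·√(K_ν(2√ν·|z|)·K_ν(2√ν·|w|))·Ĩ_ν(ν·z·w̄) → e^{z·w̄ − |z|²/2 − |w|²/2} uniformly for (z,w) in compact subsets of (ℂ∖{0})². Equivalently, 2ν·√(K_ν(2√ν|z|)·K_ν(2√ν|w|))·I_ν(2√(ν·z·w̄)) ∼ (z·w̄/|zw|)^{ν/2}·G(z,w), where G(z,w) = e^{z·w̄ − |z|²/2 − |w|²/2} is the Ginibre kernel. -/

import Mathlib

open Filter

/-- Modified Bessel function of the second kind `K_ν(x)`. -/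
noncomputable def besselK (ν x : ℝ) : ℝ :=
  ∫ t in Set.Ioi (0 : ℝ), Real.exp (-x * Real.cosh t) * Real.cosh (ν * t)

/-- The entire function `Ĩ_ν(w) = ∑_{k≥0} w^k/(k!·Γ(ν+k+1))`, so that the modified Bessel
function of the first kind is `I_ν(u) = (u/2)^ν·Ĩ_ν(u²/4)`. -/
noncomputable def Itilde (ν : ℝ) (w : ℂ) : ℂ :=
  ∑' k : ℕ, w ^ k / (((k.factorial : ℕ) : ℂ) * ((Real.Gamma (ν + (k : ℝ) + 1) : ℝ) : ℂ))

open MeasureTheory Real Set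

namespace BG

noncomputable def ck (ν : ℝ) (k : ℕ) : ℝ := ∏ j ∈ Finset.range k, (ν / (ν + j + 1))

lemma ck_pos {ν : ℝ} (hν : 0 < ν) (k : ℕ) : 0 < ck ν k := by
  apply Finset.prod_pos
  intro j _
  positivity

lemma ck_le_one {ν : ℝ} (hν : 0 < ν) (k : ℕ) : ck ν k ≤ 1 := by
  apply Finset.prod_le_one
  · intro j _; positivity
  · intro j _
    rw [div_le_one (by positivity)]
    have : (0:ℝ) ≤ (j:ℝ) + 1 := by positivity
    linarith

lemma one_sub_ck_le {ν : ℝ} (hν : 0 < ν) (k : ℕ) : 1 - ck ν k ≤ (k:ℝ)^2 / ν := by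
  induction k with
  | zero => simp [ck]
  | succ n ih =>
    have hq : ν / (ν + n + 1) ≤ 1 := by
      rw [div_le_one (by positivity)]
      have : (0:ℝ) ≤ (n:ℝ) + 1 := by positivity
      linarith
    have hq2 : 1 - ν / (ν + n + 1) ≤ ((n:ℝ)+1)/ν := by
      have h1 : (1 - ν / (ν + n + 1)) = ((n:ℝ)+1)/(ν + n + 1) := by
        field_simp
        ring
      rw [h1, div_le_div_iff₀ (by positivity) hν]
      have : (0:ℝ) ≤ (n:ℝ) := by positivity
      nlinarith
    have hcp := ck_pos hν n
    have hc1 := ck_le_one hν n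
    have hstep : ck ν (n+1) = ck ν n * (ν / (ν + n + 1)) := by
      rw [ck, Finset.prod_range_succ]; rfl
    have hqpos : 0 < ν / (ν + n + 1) := by positivity
    rw [hstep]
    push_cast
    have key : 1 - ck ν n * (ν / (ν + n + 1))
        = (1 - ck ν n) + ck ν n * (1 - ν / (ν + n + 1)) := by ring
    rw [key]
    have h2 : ck ν n * (1 - ν / (ν + n + 1)) ≤ ((n:ℝ)+1)/ν := by
      calc ck ν n * (1 - ν / (ν + n + 1)) ≤ 1 * (1 - ν / (ν + n + 1)) := by
            apply mul_le_mul_of_nonneg_right hc1 (by linarith)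
        _ = 1 - ν / (ν + n + 1) := one_mul _
        _ ≤ ((n:ℝ)+1)/ν := hq2
    have h3 : (n:ℝ)^2/ν + ((n:ℝ)+1)/ν ≤ ((n:ℝ)+1)^2/ν := by
      rw [← add_div, div_le_div_iff₀ hν hν]
      have : (0:ℝ) ≤ (n:ℝ) := by positivity
      nlinarith
    linarith

lemma Gamma_add_nat {ν : ℝ} (hν : 0 < ν) (k : ℕ) :
    Real.Gamma (ν + k + 1) = Real.Gamma (ν + 1) * ∏ j ∈ Finset.range k, (ν + j + 1) := by
  induction k with
  | zero => simp
  | succ n ih =>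
    have h1 : (ν + (n+1 : ℕ) + 1 : ℝ) = (ν + n + 1) + 1 := by push_cast; ring
    rw [h1, Real.Gamma_add_one (by positivity), ih, Finset.prod_range_succ]
    push_cast
    ring

lemma sq_le_pow (k : ℕ) : ((k:ℝ))^2 ≤ 4 * 2^k := by
  induction k with
  | zero => norm_num
  | succ n ih =>
    have hn : (0:ℝ) ≤ (n:ℝ) := by positivity
    push_cast
    have h2 : (2:ℝ)^(n+1) = 2 * 2^n := by ring
    rw [h2]
    have h1 : (1:ℝ) ≤ 2^n := one_le_pow₀ (by norm_num)
    have h3 : (n:ℝ) ≤ 2^n := by exact_mod_cast (Nat.lt_two_pow_self (n := n)).le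
    nlinarith [ih, h1, h3, sq_nonneg ((n:ℝ)-1)]

lemma lemA {ν : ℝ} (hν : 0 < ν) {B : ℝ} (hB : 0 ≤ B) {u : ℂ} (hu : ‖u‖ ≤ B) :
    ‖(Real.Gamma (ν+1) : ℂ) * Itilde ν ((ν:ℂ) * u) - Complex.exp u‖
      ≤ 4 * Real.exp (2*B) / ν := by
  have hΓpos : 0 < Real.Gamma (ν + 1) := Real.Gamma_pos_of_pos (by linarith)
  -- term identity
  have hterm : ∀ k : ℕ, (Real.Gamma (ν+1) : ℂ) *
      (((ν:ℂ) * u) ^ k / (((k.factorial : ℕ) : ℂ) * ((Real.Gamma (ν + (k : ℝ) + 1) : ℝ) : ℂ)))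
      = ((ck ν k : ℝ) : ℂ) * u^k / (k.factorial : ℂ) := by
    intro k
    set P : ℝ := ∏ j ∈ Finset.range k, (ν + j + 1) with hPdef
    have hP : (0:ℝ) < P := by
      apply Finset.prod_pos; intro j _; positivity
    have hΓkR : Real.Gamma (ν + (k:ℝ) + 1) = Real.Gamma (ν+1) * P := Gamma_add_nat hν k
    have hΓk : ((Real.Gamma (ν + (k:ℝ) + 1) : ℝ) : ℂ)
        = (Real.Gamma (ν+1) : ℂ) * ((P : ℝ) : ℂ) := by
      rw [hΓkR]; push_cast; ring
    have hckR : ck ν k = ν^k / P := by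
      rw [ck, hPdef, Finset.prod_div_distrib, Finset.prod_const, Finset.card_range]
    have hck : ((ck ν k : ℝ) : ℂ) = (ν:ℂ)^k / ((P : ℝ) : ℂ) := by
      rw [hckR]; push_cast; ring
    rw [hΓk, hck, mul_pow]
    have hfac : ((k.factorial : ℕ) : ℂ) ≠ 0 := by
      exact_mod_cast Nat.cast_ne_zero.mpr k.factorial_ne_zero
    have hΓ0 : (Real.Gamma (ν+1) : ℂ) ≠ 0 := by exact_mod_cast hΓpos.ne'
    have hP0 : ((P : ℝ) : ℂ) ≠ 0 := by exact_mod_cast hP.ne'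
    field_simp
  have hItilde : (Real.Gamma (ν+1) : ℂ) * Itilde ν ((ν:ℂ) * u)
      = ∑' k : ℕ, ((ck ν k : ℝ) : ℂ) * u^k / (k.factorial : ℂ) := by
    rw [Itilde, ← tsum_mul_left]
    exact tsum_congr hterm
  have hexp : Complex.exp u = ∑' k : ℕ, u^k / (k.factorial : ℂ) := by
    rw [Complex.exp_eq_exp_ℂ, NormedSpace.exp_eq_tsum_div]
  have hnorm1 : ∀ k : ℕ, ‖((ck ν k : ℝ) : ℂ) * u^k / (k.factorial : ℂ)‖ ≤ B^k / k.factorial := by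
    intro k
    rw [norm_div, norm_mul]
    have h1 : ‖((ck ν k : ℝ) : ℂ)‖ ≤ 1 := by
      rw [Complex.norm_real, Real.norm_eq_abs, abs_of_pos (ck_pos hν k)]
      exact ck_le_one hν k
    have h2 : ‖u^k‖ ≤ B^k := by
      rw [norm_pow]
      exact pow_le_pow_left₀ (norm_nonneg u) hu k
    have h3 : ‖((k.factorial : ℕ) : ℂ)‖ = (k.factorial : ℝ) := by
      simp
    rw [h3]
    refine div_le_div₀ (by positivity) ?_ (by exact_mod_cast k.factorial_pos) le_rfl
    calc ‖((ck ν k : ℝ) : ℂ)‖ * ‖u^k‖ ≤ 1 * B^k := by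
          exact mul_le_mul h1 h2 (norm_nonneg _) zero_le_one
      _ = B^k := one_mul _
  have hnorm2 : ∀ k : ℕ, ‖u^k / ((k.factorial : ℕ) : ℂ)‖ ≤ B^k / k.factorial := by
    intro k
    rw [norm_div, norm_pow]
    have h3 : ‖((k.factorial : ℕ) : ℂ)‖ = (k.factorial : ℝ) := by simp
    rw [h3]
    refine div_le_div₀ (by positivity) ?_ (by exact_mod_cast k.factorial_pos) le_rfl
    exact pow_le_pow_left₀ (norm_nonneg u) hu k
  have hS1 : Summable (fun k : ℕ => ((ck ν k : ℝ) : ℂ) * u^k / (k.factorial : ℂ)) :=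
    Summable.of_norm_bounded (Real.summable_pow_div_factorial B) hnorm1
  have hS2 : Summable (fun k : ℕ => u^k / ((k.factorial : ℕ) : ℂ)) :=
    Summable.of_norm_bounded (Real.summable_pow_div_factorial B) hnorm2
  have hdiff : (Real.Gamma (ν+1) : ℂ) * Itilde ν ((ν:ℂ) * u) - Complex.exp u
      = ∑' k : ℕ, (((ck ν k : ℝ) : ℂ) * u^k / (k.factorial : ℂ)
          - u^k / ((k.factorial : ℕ) : ℂ)) := by
    rw [hItilde, hexp, Summable.tsum_sub hS1 hS2]
  have htermbd : ∀ k : ℕ, ‖((ck ν k : ℝ) : ℂ) * u^k / (k.factorial : ℂ)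
      - u^k / ((k.factorial : ℕ) : ℂ)‖ ≤ 4/ν * ((2*B)^k / k.factorial) := by
    intro k
    have heq : ((ck ν k : ℝ) : ℂ) * u^k / (k.factorial : ℂ) - u^k / ((k.factorial : ℕ) : ℂ)
        = (((ck ν k - 1 : ℝ)) : ℂ) * (u^k / ((k.factorial : ℕ) : ℂ)) := by
      push_cast
      ring
    rw [heq, norm_mul, Complex.norm_real, Real.norm_eq_abs]
    have habs : |ck ν k - 1| ≤ (k:ℝ)^2 / ν := by
      rw [abs_sub_comm, abs_of_nonneg (by linarith [ck_le_one hν k])]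
      exact one_sub_ck_le hν k
    have hb2 : ‖u^k / ((k.factorial : ℕ) : ℂ)‖ ≤ B^k / k.factorial := hnorm2 k
    calc |ck ν k - 1| * ‖u^k / ((k.factorial : ℕ) : ℂ)‖
        ≤ ((k:ℝ)^2 / ν) * (B^k / k.factorial) := by
          exact mul_le_mul habs hb2 (norm_nonneg _) (by positivity)
      _ ≤ (4 * 2^k / ν) * (B^k / k.factorial) := by
          apply mul_le_mul_of_nonneg_right _ (by positivity)
          gcongr
          exact sq_le_pow k
      _ = 4/ν * ((2*B)^k / k.factorial) := by
          rw [mul_pow]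
          field_simp
  have hSnorm : Summable (fun k : ℕ => ‖((ck ν k : ℝ) : ℂ) * u^k / (k.factorial : ℂ)
      - u^k / ((k.factorial : ℕ) : ℂ)‖) := by
    apply Summable.of_nonneg_of_le (fun k => norm_nonneg _) htermbd
    exact (Real.summable_pow_div_factorial (2*B)).mul_left _
  have hS3 : Summable (fun k : ℕ => 4/ν * ((2*B)^k / k.factorial)) :=
    (Real.summable_pow_div_factorial (2*B)).mul_left _
  have hexpR : Real.exp (2*B) = ∑' k : ℕ, (2*B)^k / k.factorial := by
    rw [Real.exp_eq_exp_ℝ, NormedSpace.exp_eq_tsum_div]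
  rw [hdiff]
  calc ‖∑' k : ℕ, (((ck ν k : ℝ) : ℂ) * u^k / (k.factorial : ℂ)
          - u^k / ((k.factorial : ℕ) : ℂ))‖
      ≤ ∑' k : ℕ, ‖((ck ν k : ℝ) : ℂ) * u^k / (k.factorial : ℂ)
          - u^k / ((k.factorial : ℕ) : ℂ)‖ := norm_tsum_le_tsum_norm hSnorm
    _ ≤ ∑' k : ℕ, 4/ν * ((2*B)^k / k.factorial) := Summable.tsum_le_tsum htermbd hSnorm hS3
    _ = 4/ν * ∑' k : ℕ, ((2*B)^k / k.factorial) := tsum_mul_left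
    _ = 4 * Real.exp (2*B) / ν := by rw [← hexpR]; ring

end BG


namespace BG

lemma gk_integrable {ν c : ℝ} (hν : 0 < ν) (hc : 0 ≤ c) :
    IntegrableOn (fun u : ℝ => u^(ν-1) * Real.exp (-u - c/u)) (Ioi 0) := by
  apply Integrable.mono' (Real.GammaIntegral_convergent hν)
  · apply Measurable.aestronglyMeasurable
    fun_prop
  · filter_upwards [ae_restrict_mem measurableSet_Ioi] with u hu
    have hu0 : (0:ℝ) < u := hu
    rw [Real.norm_eq_abs, abs_of_nonneg (by positivity)]
    have h1 : Real.exp (-u - c/u) ≤ Real.exp (-u) := by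
      apply Real.exp_le_exp.mpr
      have : 0 ≤ c/u := by positivity
      linarith
    calc u^(ν-1) * Real.exp (-u - c/u) ≤ u^(ν-1) * Real.exp (-u) := by
          apply mul_le_mul_of_nonneg_left h1 (by positivity)
      _ = Real.exp (-u) * u^(ν-1) := mul_comm _ _

end BG

namespace BGrep

variable {ν x : ℝ}

lemma phi_image (hx : 0 < x) : (fun t : ℝ => (x/2) * Real.exp t) '' univ = Ioi 0 := by
  rw [image_univ]
  ext u
  simp only [mem_range, mem_Ioi]
  constructor
  · rintro ⟨t, rfl⟩; positivity
  · intro hu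
    refine ⟨Real.log (u / (x/2)), ?_⟩
    rw [Real.exp_log (by positivity)]
    field_simp

lemma phi_deriv (hx : 0 < x) : ∀ t ∈ (univ : Set ℝ),
    HasDerivWithinAt (fun t : ℝ => (x/2) * Real.exp t) ((x/2) * Real.exp t) univ t :=
  fun t _ => ((Real.hasDerivAt_exp t).const_mul (x/2)).hasDerivWithinAt

lemma phi_inj (hx : 0 < x) : InjOn (fun t : ℝ => (x/2) * Real.exp t) univ := by
  intro a _ b _ h
  have hx2 : (x/2) ≠ 0 := by positivity
  exact Real.exp_injective (mul_left_cancel₀ hx2 h)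

lemma integrand_eq (hx : 0 < x) (ν : ℝ) (t : ℝ) :
    |(x/2) * Real.exp t| • (((x/2) * Real.exp t)^(ν-1) *
        Real.exp (-((x/2) * Real.exp t) - (x^2/4)/((x/2) * Real.exp t)))
      = (x/2)^ν * Real.exp (ν*t - x * Real.cosh t) := by
  have he : (0:ℝ) < Real.exp t := Real.exp_pos t
  have hb : (0:ℝ) < (x/2) * Real.exp t := by positivity
  rw [smul_eq_mul, abs_of_pos hb]
  have hpow : (x/2) * Real.exp t * ((x/2) * Real.exp t)^(ν-1) = ((x/2) * Real.exp t)^ν := by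
    conv_rhs => rw [show ν = 1 + (ν-1) from by ring, Real.rpow_add hb, Real.rpow_one]
  have hsplit : ((x/2) * Real.exp t)^ν = (x/2)^ν * Real.exp (ν * t) := by
    rw [Real.mul_rpow (by positivity) he.le, Real.rpow_def_of_pos he, Real.log_exp, mul_comm t ν]
  have harg : -((x/2) * Real.exp t) - (x^2/4)/((x/2) * Real.exp t) = -x * Real.cosh t := by
    rw [Real.cosh_eq, Real.exp_neg]
    field_simp
    ring
  rw [← mul_assoc, hpow, hsplit, harg, mul_assoc, ← Real.exp_add]
  ring_nf

lemma key_cov (hx : 0 < x) (hν : 0 < ν) :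
    (∫ u in Ioi (0:ℝ), u^(ν-1) * Real.exp (-u - (x^2/4)/u))
      = (x/2)^ν * ∫ t : ℝ, Real.exp (ν*t - x * Real.cosh t) := by
  have h := integral_image_eq_integral_abs_deriv_smul MeasurableSet.univ (phi_deriv hx)
    (phi_inj hx) (fun u => u^(ν-1) * Real.exp (-u - (x^2/4)/u))
  rw [phi_image hx] at h
  rw [h]
  rw [Measure.restrict_univ]
  rw [show (fun t : ℝ => |(x/2) * Real.exp t| • (((x/2) * Real.exp t)^(ν-1) *
        Real.exp (-((x/2) * Real.exp t) - (x^2/4)/((x/2) * Real.exp t))))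
      = fun t : ℝ => (x/2)^ν * Real.exp (ν*t - x * Real.cosh t) from
    funext (integrand_eq hx ν)]
  exact integral_const_mul _ _

lemma exp_integrable (hx : 0 < x) (hν : 0 < ν) :
    Integrable (fun t : ℝ => Real.exp (ν*t - x * Real.cosh t)) := by
  have h := (integrableOn_image_iff_integrableOn_abs_deriv_smul MeasurableSet.univ (phi_deriv hx)
    (phi_inj hx) (fun u => u^(ν-1) * Real.exp (-u - (x^2/4)/u))).mp
    (by rw [phi_image hx]; exact BG.gk_integrable hν (by positivity))
  rw [integrableOn_univ] at h
  rw [show (fun t : ℝ => |(x/2) * Real.exp t| • (((x/2) * Real.exp t)^(ν-1) *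
        Real.exp (-((x/2) * Real.exp t) - (x^2/4)/((x/2) * Real.exp t))))
      = fun t : ℝ => (x/2)^ν * Real.exp (ν*t - x * Real.cosh t) from
    funext (integrand_eq hx ν)] at h
  have hc : ((x/2:ℝ)^ν) ≠ 0 := by positivity
  have h2 := h.const_mul (((x/2:ℝ)^ν)⁻¹)
  refine h2.congr (Eventually.of_forall fun t => ?_)
  field_simp

lemma besselK_rep (hx : 0 < x) (hν : 0 < ν) :
    besselK ν x = (1/2) * (x/2)^(-ν) *
      ∫ u in Ioi (0:ℝ), u^(ν-1) * Real.exp (-u - (x^2/4)/u) := by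
  have hf := exp_integrable hx hν
  set f : ℝ → ℝ := fun t => Real.exp (ν*t - x * Real.cosh t) with hfdef
  have h1 : besselK ν x = ∫ t in Ioi (0:ℝ), (f t + f (-t))/2 := by
    rw [besselK]
    congr 1
    funext t
    rw [hfdef]
    simp only
    have e1 : ν*t - x*Real.cosh t = (ν*t) + (-x*Real.cosh t) := by ring
    have e2 : ν*(-t) - x*Real.cosh (-t) = (-(ν*t)) + (-x*Real.cosh t) := by
      rw [Real.cosh_neg]; ring
    rw [e1, e2, Real.exp_add, Real.exp_add, Real.cosh_eq (ν*t)]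
    ring
  have hnegint : IntegrableOn (fun t : ℝ => f (-t)) (Ioi 0) := hf.comp_neg.integrableOn
  have h2 : (∫ t in Ioi (0:ℝ), (f t + f (-t))/2)
      = (1/2) * ((∫ t in Ioi (0:ℝ), f t) + ∫ t in Ioi (0:ℝ), f (-t)) := by
    calc (∫ t in Ioi (0:ℝ), (f t + f (-t))/2)
        = ∫ t in Ioi (0:ℝ), (1/2) * (f t + f (-t)) := by
          congr 1; funext t; ring
      _ = (1/2) * ∫ t in Ioi (0:ℝ), (f t + f (-t)) := integral_const_mul _ _
      _ = (1/2) * ((∫ t in Ioi (0:ℝ), f t) + ∫ t in Ioi (0:ℝ), f (-t)) := by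
          rw [integral_add hf.integrableOn hnegint]
  have h3 : (∫ t in Ioi (0:ℝ), f (-t)) = ∫ t in Iic (0:ℝ), f t := by
    simpa using integral_comp_neg_Ioi (c := (0:ℝ)) f
  have h4 : (∫ t in Iic (0:ℝ), f t) + (∫ t in Ioi (0:ℝ), f t) = ∫ t : ℝ, f t :=
    intervalIntegral.integral_Iic_add_Ioi hf.integrableOn hf.integrableOn
  have hmain : besselK ν x = (1/2) * ∫ t : ℝ, f t := by
    rw [h1, h2, h3, ← h4]
    ring
  rw [hmain, key_cov hx hν, Real.rpow_neg (le_of_lt (by positivity : (0:ℝ) < x/2))]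
  have hne : ((x/2:ℝ)^ν) ≠ 0 := by positivity
  field_simp
  rw [← hfdef]

end BGrep

namespace BGmom

lemma exp_lip {p q : ℝ} (hp : 0 ≤ p) (hq : 0 ≤ q) :
    |Real.exp (-p) - Real.exp (-q)| ≤ |p - q| := by
  wlog h : q ≤ p generalizing p q
  · rw [abs_sub_comm, abs_sub_comm p q]
    exact this hq hp (le_of_not_ge h)
  have h1 : Real.exp (-p) ≤ Real.exp (-q) := Real.exp_le_exp.mpr (by linarith)
  rw [abs_of_nonpos (by linarith), abs_of_nonneg (by linarith)]
  have h2 : 1 - (p - q) ≤ Real.exp (-(p-q)) := by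
    have := Real.add_one_le_exp (-(p-q))
    linarith
  have h3 : Real.exp (-p) = Real.exp (-q) * Real.exp (-(p-q)) := by
    rw [← Real.exp_add]; ring_nf
  have h4 : Real.exp (-q) ≤ 1 := Real.exp_le_one_iff.mpr (by linarith)
  have h5 : Real.exp (-q) * (1 - (p - q)) ≤ Real.exp (-q) * Real.exp (-(p-q)) :=
    mul_le_mul_of_nonneg_left h2 (Real.exp_pos _).le
  nlinarith [Real.exp_pos (-q), Real.exp_pos (-(p-q))]

variable {ν : ℝ}

lemma mom_pointwise (hu : (0:ℝ) < u) (ν : ℝ) :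
    u^(ν-1) * Real.exp (-u) * (ν/u - 1)^2
    = ν^2 * (Real.exp (-u) * u^((ν-2)-1)) - 2*ν*(Real.exp (-u) * u^((ν-1)-1))
      + Real.exp (-u) * u^(ν-1) := by
  have e1 : u^((ν-1)-1) = u^(ν-1) / u := by
    rw [Real.rpow_sub hu, Real.rpow_one]
  have e2 : u^((ν-2)-1) = u^(ν-1) / u / u := by
    rw [show (ν-2)-1 = ((ν-1)-1)-1 by ring, Real.rpow_sub hu, Real.rpow_sub hu, Real.rpow_one]
  rw [e1, e2]
  field_simp
  ring

lemma mom_integrable (hν : 2 < ν) :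
    IntegrableOn (fun u : ℝ => u^(ν-1) * Real.exp (-u) * (ν/u - 1)^2) (Ioi 0) := by
  have I1 := Real.GammaIntegral_convergent (show (0:ℝ) < ν - 2 by linarith)
  have I2 := Real.GammaIntegral_convergent (show (0:ℝ) < ν - 1 by linarith)
  have I3 := Real.GammaIntegral_convergent (show (0:ℝ) < ν by linarith)
  have h : IntegrableOn (fun u : ℝ => ν^2 * (Real.exp (-u) * u^((ν-2)-1))
      - 2*ν*(Real.exp (-u) * u^((ν-1)-1)) + Real.exp (-u) * u^(ν-1)) (Ioi 0) :=
    ((I1.const_mul (ν^2)).sub (I2.const_mul (2*ν))).add I3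
  apply h.congr_fun (fun u hu => (mom_pointwise hu ν).symm) measurableSet_Ioi

lemma mom_value (hν : 2 < ν) :
    (∫ u in Ioi (0:ℝ), u^(ν-1) * Real.exp (-u) * (ν/u - 1)^2)
      = (ν+2)/((ν-1)*(ν-2)) * Real.Gamma ν := by
  have I1 := Real.GammaIntegral_convergent (show (0:ℝ) < ν - 2 by linarith)
  have I2 := Real.GammaIntegral_convergent (show (0:ℝ) < ν - 1 by linarith)
  have I3 := Real.GammaIntegral_convergent (show (0:ℝ) < ν by linarith)
  have h0 : (∫ u in Ioi (0:ℝ), u^(ν-1) * Real.exp (-u) * (ν/u - 1)^2)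
      = ∫ u in Ioi (0:ℝ), (ν^2 * (Real.exp (-u) * u^((ν-2)-1))
          - 2*ν*(Real.exp (-u) * u^((ν-1)-1)) + Real.exp (-u) * u^(ν-1)) := by
    apply setIntegral_congr_fun measurableSet_Ioi
    intro u hu
    exact mom_pointwise hu ν
  have J1 : IntegrableOn (fun u : ℝ => ν^2 * (Real.exp (-u) * u^((ν-2)-1))) (Ioi 0) := by
    exact I1.const_mul (ν^2)
  have J2 : IntegrableOn (fun u : ℝ => 2*ν*(Real.exp (-u) * u^((ν-1)-1))) (Ioi 0) := by
    exact I2.const_mul (2*ν)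
  have J12 : IntegrableOn (fun u : ℝ => ν^2 * (Real.exp (-u) * u^((ν-2)-1))
      - 2*ν*(Real.exp (-u) * u^((ν-1)-1))) (Ioi 0) := by
    exact J1.sub J2
  rw [h0, integral_add J12 I3, integral_sub J1 J2, integral_const_mul, integral_const_mul]
  rw [← Real.Gamma_eq_integral (show (0:ℝ) < ν - 2 by linarith),
    ← Real.Gamma_eq_integral (show (0:ℝ) < ν - 1 by linarith),
    ← Real.Gamma_eq_integral (show (0:ℝ) < ν by linarith)]
  have hg1 : Real.Gamma (ν-1) = (ν-2) * Real.Gamma (ν-2) := by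
    have := Real.Gamma_add_one (s := ν - 2) (by linarith)
    rw [show ν - 2 + 1 = ν - 1 by ring] at this
    exact this
  have hg2 : Real.Gamma ν = (ν-1) * Real.Gamma (ν-1) := by
    have := Real.Gamma_add_one (s := ν - 1) (by linarith)
    rw [show ν - 1 + 1 = ν by ring] at this
    exact this
  rw [hg2, hg1]
  have h1 : ν - 1 ≠ 0 := by linarith
  have h2 : ν - 2 ≠ 0 := by linarith
  field_simp
  ring

end BGmom

namespace BGB

lemma besselK_nonneg (ν x : ℝ) : 0 ≤ besselK ν x := by
  apply setIntegral_nonneg measurableSet_Ioi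
  intro t _
  exact mul_nonneg (Real.exp_pos _).le (Real.cosh_pos _).le

set_option maxHeartbeats 2000000 in
lemma lemBcore {ν b ε y : ℝ} (hν : 2 < ν) (hb : 0 < b) (hε : 0 < ε) (hy : 0 < y) (hyb : y ≤ b) :
    |2 * ν^(ν/2) * y^ν * besselK ν (2*Real.sqrt ν*y) / Real.Gamma ν - Real.exp (-y^2)|
      ≤ b^2/2 * (ε + ((ν+2)/((ν-1)*(ν-2)))/ε) := by
  have hν0 : (0:ℝ) < ν := by linarith
  have hΓ : 0 < Real.Gamma ν := Real.Gamma_pos_of_pos hν0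
  set x := 2*Real.sqrt ν*y with hxdef
  have hsν : 0 < Real.sqrt ν := Real.sqrt_pos.mpr hν0
  have hx : 0 < x := by positivity
  have hx2 : x/2 = Real.sqrt ν * y := by rw [hxdef]; ring
  have hc : x^2/4 = ν*y^2 := by
    rw [hxdef, mul_pow, mul_pow, Real.sq_sqrt hν0.le]
    ring
  set J := ∫ u in Ioi (0:ℝ), u^(ν-1) * Real.exp (-u - (ν*y^2)/u) with hJdef
  have hrep : besselK ν x = (1/2) * (x/2)^(-ν) * J := by
    rw [BGrep.besselK_rep hx hν0, hJdef, hc]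
  have hA : 2 * ν^(ν/2) * y^ν * besselK ν x / Real.Gamma ν = J / Real.Gamma ν := by
    rw [hrep, hx2]
    have h1 : (Real.sqrt ν * y)^(-ν) = ν^(-(ν/2)) * y^(-ν) := by
      rw [Real.mul_rpow (Real.sqrt_nonneg ν) hy.le, Real.sqrt_eq_rpow,
        ← Real.rpow_mul hν0.le]
      norm_num
      left
      ring
    rw [h1]
    have h2 : ν^(ν/2) * ν^(-(ν/2)) = 1 := by
      rw [← Real.rpow_add hν0]; norm_num
    have h3 : y^ν * y^(-ν) = 1 := by
      rw [← Real.rpow_add hy]; norm_num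
    calc 2 * ν^(ν/2) * y^ν * (1/2 * (ν^(-(ν/2)) * y^(-ν)) * J) / Real.Gamma ν
        = (ν^(ν/2) * ν^(-(ν/2))) * (y^ν * y^(-ν)) * J / Real.Gamma ν := by ring
      _ = J / Real.Gamma ν := by rw [h2, h3]; ring
  rw [hA]
  have hGint := Real.GammaIntegral_convergent hν0
  have hJint : IntegrableOn (fun u : ℝ => u^(ν-1) * Real.exp (-u - (ν*y^2)/u)) (Ioi 0) :=
    BG.gk_integrable hν0 (by positivity)
  have hEint : IntegrableOn (fun u : ℝ => Real.exp (-y^2) * (Real.exp (-u) * u^(ν-1))) (Ioi 0) :=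
    hGint.const_mul _
  have hdiff : J - Real.Gamma ν * Real.exp (-y^2)
      = ∫ u in Ioi (0:ℝ), (u^(ν-1) * Real.exp (-u - (ν*y^2)/u)
          - Real.exp (-y^2) * (Real.exp (-u) * u^(ν-1))) := by
    rw [integral_sub hJint hEint, hJdef, integral_const_mul, ← Real.Gamma_eq_integral hν0]
    ring
  set R := (ν+2)/((ν-1)*(ν-2)) with hRdef
  set g : ℝ → ℝ := fun u => y^2/2*ε * (Real.exp (-u) * u^(ν-1))
      + y^2/2/ε * (u^(ν-1) * Real.exp (-u) * (ν/u - 1)^2) with hgdef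
  have hgint : IntegrableOn g (Ioi 0) :=
    (hGint.const_mul _).add ((BGmom.mom_integrable hν).const_mul _)
  have hptbd : ∀ u ∈ Ioi (0:ℝ), |u^(ν-1) * Real.exp (-u - (ν*y^2)/u)
      - Real.exp (-y^2) * (Real.exp (-u) * u^(ν-1))| ≤ g u := by
    intro u hu
    have hu0 : (0:ℝ) < u := hu
    have hupow : (0:ℝ) ≤ u^(ν-1) := by positivity
    have hsplit : u^(ν-1) * Real.exp (-u - (ν*y^2)/u)
        - Real.exp (-y^2) * (Real.exp (-u) * u^(ν-1))
        = u^(ν-1) * Real.exp (-u) * (Real.exp (-((ν*y^2)/u)) - Real.exp (-y^2)) := by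
      rw [show -u - (ν*y^2)/u = -u + -((ν*y^2)/u) by ring, Real.exp_add]
      ring
    rw [hsplit, abs_mul, abs_of_nonneg (by positivity : (0:ℝ) ≤ u^(ν-1) * Real.exp (-u))]
    have hlip : |Real.exp (-((ν*y^2)/u)) - Real.exp (-y^2)| ≤ |(ν*y^2)/u - y^2| :=
      BGmom.exp_lip (by positivity) (by positivity)
    have heq2 : |(ν*y^2)/u - y^2| = y^2 * |ν/u - 1| := by
      rw [show (ν*y^2)/u - y^2 = y^2 * (ν/u - 1) by field_simp, abs_mul,
        abs_of_nonneg (by positivity : (0:ℝ) ≤ y^2)]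
    have hamgm : y^2 * |ν/u - 1| ≤ y^2/2*ε + y^2/2/ε * (ν/u - 1)^2 := by
      have h2 : 2*ε*|ν/u - 1| ≤ ε^2 + (ν/u - 1)^2 := by
        nlinarith [sq_nonneg (ε - |ν/u - 1|), sq_abs (ν/u - 1)]
      have hy2 : (0:ℝ) ≤ y^2 := sq_nonneg y
      rw [show y^2/2*ε + y^2/2/ε * (ν/u - 1)^2 = y^2/(2*ε) * (ε^2 + (ν/u - 1)^2) by
        field_simp]
      rw [show y^2 * |ν/u - 1| = y^2/(2*ε) * (2*ε*|ν/u - 1|) by field_simp]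
      exact mul_le_mul_of_nonneg_left h2 (by positivity)
    calc u^(ν-1) * Real.exp (-u) * |Real.exp (-((ν*y^2)/u)) - Real.exp (-y^2)|
        ≤ u^(ν-1) * Real.exp (-u) * (y^2 * |ν/u - 1|) := by
          apply mul_le_mul_of_nonneg_left (hlip.trans heq2.le) (by positivity)
      _ ≤ u^(ν-1) * Real.exp (-u) * (y^2/2*ε + y^2/2/ε * (ν/u - 1)^2) := by
          apply mul_le_mul_of_nonneg_left hamgm (by positivity)
      _ = g u := by rw [hgdef]; ring
  have habs : |J - Real.Gamma ν * Real.exp (-y^2)| ≤ ∫ u in Ioi (0:ℝ), g u := by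
    rw [hdiff]
    calc |∫ u in Ioi (0:ℝ), (u^(ν-1) * Real.exp (-u - (ν*y^2)/u)
          - Real.exp (-y^2) * (Real.exp (-u) * u^(ν-1)))|
        ≤ ∫ u in Ioi (0:ℝ), |u^(ν-1) * Real.exp (-u - (ν*y^2)/u)
          - Real.exp (-y^2) * (Real.exp (-u) * u^(ν-1))| := by
          simpa using norm_integral_le_integral_norm (μ := volume.restrict (Ioi 0))
            (fun u : ℝ => u^(ν-1) * Real.exp (-u - (ν*y^2)/u)
              - Real.exp (-y^2) * (Real.exp (-u) * u^(ν-1)))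
      _ ≤ ∫ u in Ioi (0:ℝ), g u := by
          apply integral_mono_of_nonneg (Eventually.of_forall fun u => abs_nonneg _) hgint
          filter_upwards [ae_restrict_mem measurableSet_Ioi] with u hu using hptbd u hu
  have hgval : (∫ u in Ioi (0:ℝ), g u)
      = y^2/2*ε * Real.Gamma ν + y^2/2/ε * (R * Real.Gamma ν) := by
    rw [hgdef]
    rw [integral_add (hGint.const_mul _) ((BGmom.mom_integrable hν).const_mul _),
      integral_const_mul, integral_const_mul, ← Real.Gamma_eq_integral hν0,
      BGmom.mom_value hν, hRdef]
  have hfinal : |J / Real.Gamma ν - Real.exp (-y^2)|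
      ≤ (y^2/2*ε * Real.Gamma ν + y^2/2/ε * (R * Real.Gamma ν)) / Real.Gamma ν := by
    have heq3 : J / Real.Gamma ν - Real.exp (-y^2)
        = (J - Real.Gamma ν * Real.exp (-y^2)) / Real.Gamma ν := by
      field_simp
    rw [heq3, abs_div, abs_of_pos hΓ]
    gcongr
    exact habs.trans hgval.le
  refine hfinal.trans ?_
  have heq4 : (y^2/2*ε * Real.Gamma ν + y^2/2/ε * (R * Real.Gamma ν)) / Real.Gamma ν
      = y^2/2 * (ε + R/ε) := by
    field_simp
  rw [heq4]
  have hRnn : 0 ≤ R := by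
    rw [hRdef]
    have h1 : (0:ℝ) < ν - 1 := by linarith
    have h2 : (0:ℝ) < ν - 2 := by linarith
    positivity
  have : y^2 ≤ b^2 := by nlinarith
  have hpar : 0 ≤ ε + R/ε := by positivity
  nlinarith [mul_le_mul_of_nonneg_right this hpar]

end BGB

namespace BGfin

noncomputable def Afun (ν y : ℝ) : ℝ :=
  2 * ν^(ν/2) * y^ν * besselK ν (2*Real.sqrt ν*y) / Real.Gamma ν

lemma Afun_nonneg {ν y : ℝ} (hν : 0 < ν) (hy : 0 < y) : 0 ≤ Afun ν y := by
  have hΓ : 0 < Real.Gamma ν := Real.Gamma_pos_of_pos hν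
  have hK := BGB.besselK_nonneg ν (2*Real.sqrt ν*y)
  have h1 : (0:ℝ) ≤ 2 * ν^(ν/2) * y^ν := by positivity
  exact div_nonneg (mul_nonneg h1 hK) hΓ.le

lemma lemB {b : ℝ} (hb : 0 < b) {ε : ℝ} (hε : 0 < ε) :
    ∀ᶠ ν : ℝ in atTop, ∀ y : ℝ, 0 < y → y ≤ b → |Afun ν y - Real.exp (-y^2)| ≤ ε := by
  set δ := ε/b^2 with hδdef
  have hδ0 : 0 < δ := by positivity
  filter_upwards [eventually_ge_atTop (4:ℝ), eventually_ge_atTop (8/δ^2)] with ν h4 h8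
  intro y hy hyb
  have hν2 : 2 < ν := by linarith
  have hpos : (0:ℝ) < (ν-1)*(ν-2) := by nlinarith
  have hR : (ν+2)/((ν-1)*(ν-2)) ≤ δ^2 := by
    have hR8 : (ν+2)/((ν-1)*(ν-2)) ≤ 8/ν := by
      rw [div_le_div_iff₀ hpos (by linarith)]
      nlinarith
    refine hR8.trans ?_
    rw [div_le_iff₀ (by linarith : (0:ℝ) < ν)]
    have e : δ^2 * (8/δ^2) = 8 := by field_simp
    nlinarith [mul_le_mul_of_nonneg_left h8 (sq_nonneg δ)]
  have hcore := BGB.lemBcore hν2 hb hδ0 hy hyb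
  rw [Afun]
  refine hcore.trans ?_
  have hRδ : ((ν+2)/((ν-1)*(ν-2)))/δ ≤ δ := by
    rw [div_le_iff₀ hδ0]
    nlinarith
  calc b^2/2 * (δ + ((ν+2)/((ν-1)*(ν-2)))/δ) ≤ b^2/2 * (δ + δ) := by
        apply mul_le_mul_of_nonneg_left (by linarith) (by positivity)
    _ = b^2 * δ := by ring
    _ = ε := by rw [hδdef]; field_simp

lemma sqrt_sub_le {p q : ℝ} (hp : 0 ≤ p) (hq : 0 ≤ q) :
    |Real.sqrt p - Real.sqrt q| ≤ Real.sqrt |p - q| := by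
  wlog h : q ≤ p generalizing p q
  · rw [abs_sub_comm, abs_sub_comm p q]
    exact this hq hp (le_of_not_ge h)
  rw [abs_of_nonneg (sub_nonneg.mpr (Real.sqrt_le_sqrt h)),
    abs_of_nonneg (by linarith : (0:ℝ) ≤ p - q)]
  have key : Real.sqrt p ≤ Real.sqrt q + Real.sqrt (p - q) := by
    have e : (Real.sqrt q + Real.sqrt (p-q))^2 = q + (p-q) + 2*(Real.sqrt q * Real.sqrt (p-q)) := by
      rw [add_sq, Real.sq_sqrt hq, Real.sq_sqrt (by linarith)]
      ring
    have h1 : p ≤ (Real.sqrt q + Real.sqrt (p-q))^2 := by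
      nlinarith [Real.sqrt_nonneg q, Real.sqrt_nonneg (p-q)]
    calc Real.sqrt p ≤ Real.sqrt ((Real.sqrt q + Real.sqrt (p-q))^2) := Real.sqrt_le_sqrt h1
      _ = Real.sqrt q + Real.sqrt (p-q) := Real.sqrt_sq (by positivity)
  linarith

lemma prod_eq {ν : ℝ} (hν : 0 < ν) {z w : ℂ} (hz : z ≠ 0) (hw : w ≠ 0) :
    (2 * ν ^ (ν / 2 + 1) * (‖z * w‖) ^ (ν / 2) *
        Real.sqrt (besselK ν (2 * Real.sqrt ν * ‖z‖) *
          besselK ν (2 * Real.sqrt ν * ‖w‖)) : ℝ)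
      = Real.Gamma (ν+1) *
        Real.sqrt (Afun ν (‖z‖) * Afun ν (‖w‖)) := by
  have hΓ : 0 < Real.Gamma ν := Real.Gamma_pos_of_pos hν
  set az := ‖z‖ with hazdef
  set aw := ‖w‖ with hawdef
  have haz : 0 < az := by simpa [hazdef] using norm_pos_iff.mpr hz
  have haw : 0 < aw := by simpa [hawdef] using norm_pos_iff.mpr hw
  set c : ℝ := 2 * ν^(ν/2) * (az*aw)^(ν/2) / Real.Gamma ν with hcdef
  have hc0 : 0 ≤ c := by positivity
  have e1 : (az*aw)^(ν/2) * (az*aw)^(ν/2) = az^ν * aw^ν := by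
    rw [← Real.rpow_add (by positivity), show ν/2 + ν/2 = ν by ring,
      Real.mul_rpow haz.le haw.le]
  have key : Afun ν az * Afun ν aw
      = c^2 * (besselK ν (2*Real.sqrt ν*az) * besselK ν (2*Real.sqrt ν*aw)) := by
    rw [Afun, Afun, hcdef]
    rw [pow_two]
    field_simp
    linear_combination (-1 * besselK ν (2*Real.sqrt ν*az)
      * besselK ν (2*Real.sqrt ν*aw)) * e1
  rw [key, Real.sqrt_mul (sq_nonneg c), Real.sqrt_sq hc0]
  have habs : ‖z * w‖ = az * aw := by rw [norm_mul]
  have hΓ1 : Real.Gamma (ν+1) = ν * Real.Gamma ν := Real.Gamma_add_one hν.ne'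
  have hp1 : ν^(ν/2+1) = ν^(ν/2) * ν := by
    rw [Real.rpow_add hν, Real.rpow_one]
  rw [habs, hΓ1, hp1, hcdef]
  field_simp

end BGfin


set_option maxHeartbeats 1000000 in
/-- As `ν → ∞` through positive real values,
`2·ν^{ν/2+1}·|zw|^{ν/2}·√(K_ν(2√ν|z|)·K_ν(2√ν|w|))·Ĩ_ν(ν·z·w̄)` converges to the Ginibre
kernel `G(z,w) = e^{z·w̄ − |z|²/2 − |w|²/2}`, uniformly on compact subsets of `(ℂ∖{0})²`. -/
theorem bessel_product_to_ginibre (Ω : Set (ℂ × ℂ)) (hΩ : IsCompact Ω)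
    (hΩ' : ∀ p ∈ Ω, p.1 ≠ 0 ∧ p.2 ≠ 0) :
    TendstoUniformlyOn
      (fun (ν : ℝ) (p : ℂ × ℂ) =>
        ((2 * ν ^ (ν / 2 + 1) * (‖p.1 * p.2‖) ^ (ν / 2) *
            Real.sqrt (besselK ν (2 * Real.sqrt ν * ‖p.1‖) *
              besselK ν (2 * Real.sqrt ν * ‖p.2‖)) : ℝ) : ℂ) *
          Itilde ν ((ν : ℂ) * p.1 * (starRingEnd ℂ) p.2))
      (fun p =>
        Complex.exp (p.1 * (starRingEnd ℂ) p.2 - (((‖p.1‖) ^ 2 / 2 : ℝ) : ℂ) -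
          (((‖p.2‖) ^ 2 / 2 : ℝ) : ℂ)))
      atTop Ω := by
  rcases Set.eq_empty_or_nonempty Ω with rfl | hne
  · exact tendstoUniformlyOn_empty
  obtain ⟨p₀, hp₀Ω, hp₀⟩ := hΩ.exists_isMinOn hne
    (((continuous_norm.comp continuous_fst).min
      (continuous_norm.comp continuous_snd)).continuousOn)
  obtain ⟨p₁, hp₁Ω, hp₁⟩ := hΩ.exists_isMaxOn hne
    (((continuous_norm.comp continuous_fst).max
      (continuous_norm.comp continuous_snd)).continuousOn)
  set a := min (‖p₀.1‖) (‖p₀.2‖) with hadef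
  set b := max (‖p₁.1‖) (‖p₁.2‖) with hbdef
  have ha : 0 < a :=
    lt_min (norm_pos_iff.mpr (hΩ' p₀ hp₀Ω).1) (norm_pos_iff.mpr (hΩ' p₀ hp₀Ω).2)
  have hbound : ∀ p ∈ Ω, (0 < ‖p.1‖ ∧ ‖p.1‖ ≤ b)
      ∧ (0 < ‖p.2‖ ∧ ‖p.2‖ ≤ b) := by
    intro p hp
    have h1 : a ≤ min (‖p.1‖) (‖p.2‖) := (isMinOn_iff.mp hp₀) p hp
    have h2 : max (‖p.1‖) (‖p.2‖) ≤ b := (isMaxOn_iff.mp hp₁) p hp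
    exact ⟨⟨lt_of_lt_of_le ha (h1.trans (min_le_left _ _)),
        le_trans (le_max_left _ _) h2⟩,
      ⟨lt_of_lt_of_le ha (h1.trans (min_le_right _ _)),
        le_trans (le_max_right _ _) h2⟩⟩
  have hb : 0 < b := by
    have h := (hbound p₀ hp₀Ω).1
    exact lt_of_lt_of_le h.1 h.2
  rw [Metric.tendstoUniformlyOn_iff]
  intro ε hε
  set E := Real.exp (b^2) with hEdef
  have hE1 : 1 ≤ E := by
    have := Real.add_one_le_exp (b^2)
    have := sq_nonneg b
    rw [hEdef]
    linarith
  have hE0 : 0 < E := lt_of_lt_of_le one_pos hE1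
  set η := min 1 (ε^2/(12*E^2)) with hηdef
  have hη0 : 0 < η := lt_min one_pos (by positivity)
  have hη1 : η ≤ 1 := min_le_left _ _
  have hη2 : η ≤ ε^2/(12*E^2) := min_le_right _ _
  filter_upwards [BGfin.lemB hb hη0, eventually_ge_atTop (32*Real.exp (2*b^2)/ε),
    eventually_gt_atTop (0:ℝ)] with ν hB hν32 hν0
  intro p hp
  obtain ⟨⟨hz0, hzb⟩, ⟨hw0, hwb⟩⟩ := hbound p hp
  obtain ⟨hzne, hwne⟩ := hΩ' p hp
  set az := ‖p.1‖ with hazdef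
  set aw := ‖p.2‖ with hawdef
  set u := p.1 * (starRingEnd ℂ) p.2 with hudef
  have hu_abs : ‖u‖ ≤ b^2 := by
    rw [hudef, norm_mul, Complex.norm_conj, ← hazdef, ← hawdef]
    calc az * aw ≤ b * b := mul_le_mul hzb hwb hw0.le (le_trans hz0.le hzb)
      _ = b^2 := (sq b).symm
  set Az := BGfin.Afun ν az with hAzdef
  set Aw := BGfin.Afun ν aw with hAwdef
  set SA := Real.sqrt (Az * Aw) with hSAdef
  set Ez := Real.exp (-az^2) with hEzdef
  set Ew := Real.exp (-aw^2) with hEwdef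
  set SE := Real.sqrt (Ez * Ew) with hSEdef
  set T := (Real.Gamma (ν+1) : ℂ) * Itilde ν ((ν:ℂ) * u) with hTdef
  have hcoef : (2 * ν ^ (ν / 2 + 1) * (‖p.1 * p.2‖) ^ (ν / 2) *
        Real.sqrt (besselK ν (2 * Real.sqrt ν * az) * besselK ν (2 * Real.sqrt ν * aw)) : ℝ)
      = Real.Gamma (ν+1) * SA := by
    rw [hSAdef, hAzdef, hAwdef, hazdef, hawdef]
    exact BGfin.prod_eq hν0 hzne hwne
  have hFeq : ((2 * ν ^ (ν / 2 + 1) * (‖p.1 * p.2‖) ^ (ν / 2) *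
            Real.sqrt (besselK ν (2 * Real.sqrt ν * az) *
              besselK ν (2 * Real.sqrt ν * aw)) : ℝ) : ℂ) *
          Itilde ν ((ν : ℂ) * p.1 * (starRingEnd ℂ) p.2)
      = (SA : ℂ) * T := by
    rw [show (ν:ℂ) * p.1 * (starRingEnd ℂ) p.2 = (ν:ℂ) * u from by rw [hudef]; ring]
    rw [hcoef, hTdef]
    push_cast
    ring
  have hSE : SE = Real.exp (-(az^2/2) - aw^2/2) := by
    have h : Ez * Ew = (Real.exp (-(az^2/2) - aw^2/2))^2 := by
      rw [hEzdef, hEwdef, ← Real.exp_add, pow_two (Real.exp (-(az^2/2) - aw^2/2)),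
        ← Real.exp_add]
      congr 1
      ring
    rw [hSEdef, h, Real.sqrt_sq (Real.exp_pos _).le]
  have hGeq : Complex.exp (u - ((az^2/2 : ℝ):ℂ) - ((aw^2/2 : ℝ):ℂ))
      = (SE : ℂ) * Complex.exp u := by
    rw [hSE]
    rw [show u - ((az^2/2 : ℝ):ℂ) - ((aw^2/2 : ℝ):ℂ)
        = ((-(az^2/2) - aw^2/2 : ℝ) : ℂ) + u from by push_cast; ring]
    rw [Complex.exp_add, Complex.ofReal_exp]
  rw [dist_eq_norm]
  rw [show Complex.exp (u - ((az ^ 2 / 2 : ℝ):ℂ) - ((aw ^ 2 / 2 : ℝ):ℂ))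
        - ((2 * ν ^ (ν / 2 + 1) * (‖p.1 * p.2‖) ^ (ν / 2) *
            Real.sqrt (besselK ν (2 * Real.sqrt ν * az) *
              besselK ν (2 * Real.sqrt ν * aw)) : ℝ) : ℂ) *
          Itilde ν ((ν : ℂ) * p.1 * (starRingEnd ℂ) p.2)
      = (SE : ℂ) * Complex.exp u - (SA : ℂ) * T from by rw [hGeq, hFeq]]
  have hAz : |Az - Ez| ≤ η := hB az hz0 hzb
  have hAw : |Aw - Ew| ≤ η := hB aw hw0 hwb
  have hAz0 : 0 ≤ Az := BGfin.Afun_nonneg hν0 hz0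
  have hAw0 : 0 ≤ Aw := BGfin.Afun_nonneg hν0 hw0
  have hEz1 : Ez ≤ 1 := Real.exp_le_one_iff.mpr (neg_nonpos.mpr (sq_nonneg az))
  have hEw1 : Ew ≤ 1 := Real.exp_le_one_iff.mpr (neg_nonpos.mpr (sq_nonneg aw))
  have hEz0 : 0 < Ez := Real.exp_pos _
  have hEw0 : 0 < Ew := Real.exp_pos _
  have hAz2 : Az ≤ 2 := by
    have := abs_le.mp hAz
    linarith
  have hAw2 : Aw ≤ 2 := by
    have := abs_le.mp hAw
    linarith
  have hprod : |Az*Aw - Ez*Ew| ≤ 3*η := by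
    have e : Az*Aw - Ez*Ew = Az*(Aw - Ew) + Ew*(Az - Ez) := by ring
    rw [e]
    calc |Az*(Aw-Ew) + Ew*(Az-Ez)| ≤ |Az*(Aw-Ew)| + |Ew*(Az-Ez)| := abs_add_le _ _
      _ = Az*|Aw-Ew| + Ew*|Az-Ez| := by
          rw [abs_mul, abs_mul, abs_of_nonneg hAz0, abs_of_nonneg hEw0.le]
      _ ≤ 2*η + 1*η := by
          apply add_le_add
          · exact mul_le_mul hAz2 hAw (abs_nonneg _) (by norm_num)
          · exact mul_le_mul hEw1 hAz (abs_nonneg _) zero_le_one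
      _ = 3*η := by ring
  have hSASE : |SA - SE| ≤ ε/(2*E) := by
    have h1 : |SA - SE| ≤ Real.sqrt |Az*Aw - Ez*Ew| :=
      BGfin.sqrt_sub_le (mul_nonneg hAz0 hAw0) (by positivity)
    refine h1.trans ?_
    have h2 : |Az*Aw - Ez*Ew| ≤ (ε/(2*E))^2 := by
      refine hprod.trans ?_
      calc 3*η ≤ 3*(ε^2/(12*E^2)) := by linarith
        _ = (ε/(2*E))^2 := by
            field_simp
            ring
    calc Real.sqrt |Az*Aw - Ez*Ew| ≤ Real.sqrt ((ε/(2*E))^2) := Real.sqrt_le_sqrt h2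
      _ = ε/(2*E) := Real.sqrt_sq (by positivity)
  have hSA2 : SA ≤ 2 := by
    rw [hSAdef]
    calc Real.sqrt (Az*Aw) ≤ Real.sqrt 4 := Real.sqrt_le_sqrt (by nlinarith)
      _ = 2 := by
          rw [show (4:ℝ) = 2^2 by norm_num, Real.sqrt_sq (by norm_num : (0:ℝ) ≤ 2)]
  have hSA0 : 0 ≤ SA := Real.sqrt_nonneg _
  have hTexp : ‖T - Complex.exp u‖ ≤ ε/8 := by
    have h1 := BG.lemA hν0 (show (0:ℝ) ≤ b^2 by positivity) hu_abs
    rw [← hTdef] at h1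
    have h2 : 4*Real.exp (2*b^2)/ν ≤ ε/8 := by
      rw [div_le_div_iff₀ hν0 (by norm_num)]
      have h3 := mul_le_mul_of_nonneg_left hν32 hε.le
      have h4 : ε * (32*Real.exp (2*b^2)/ε) = 32*Real.exp (2*b^2) := by field_simp
      linarith
    exact h1.trans h2
  have hexpu : ‖Complex.exp u‖ ≤ E := by
    rw [Complex.norm_exp, hEdef]
    apply Real.exp_le_exp.mpr
    exact (Complex.re_le_norm u).trans hu_abs
  have hsplit : (SE:ℂ)*Complex.exp u - (SA:ℂ)*T
      = ((SE - SA : ℝ):ℂ)*Complex.exp u + (SA:ℂ)*(Complex.exp u - T) := by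
    push_cast
    ring
  rw [hsplit]
  calc ‖((SE - SA : ℝ):ℂ)*Complex.exp u + (SA:ℂ)*(Complex.exp u - T)‖
      ≤ ‖((SE - SA : ℝ):ℂ)*Complex.exp u‖ + ‖(SA:ℂ)*(Complex.exp u - T)‖ := norm_add_le _ _
    _ = |SE - SA| * ‖Complex.exp u‖ + SA * ‖Complex.exp u - T‖ := by
        rw [norm_mul, norm_mul, Complex.norm_real, Real.norm_eq_abs,
          Complex.norm_real, Real.norm_eq_abs, abs_of_nonneg hSA0]
    _ ≤ (ε/(2*E))*E + 2*(ε/8) := by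
        apply add_le_add
        · exact mul_le_mul (by rw [abs_sub_comm]; exact hSASE) hexpu (norm_nonneg _)
            (by positivity)
        · rw [norm_sub_rev]
          exact mul_le_mul hSA2 hTexp (norm_nonneg _) (by norm_num)
    _ < ε := by
        have he : (ε/(2*E))*E = ε/2 := by
          field_simp
        rw [he]
        linarith
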